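/- Let f, g ∈ Z_p[[X]] be nonzero power series with the same μ-invariant. Then for all sufficiently large n, for any primitive p^n-th root of unity ζ, one has ord_p(f(ζ−1)) − ord_p(g(ζ−1)) = (λ_f − λ_g)/(p^n − p^{n−1}); in particular this difference tends to 0 as n → ∞, and for any constant c > 0 and n large, |ord_p(f(ζ−1)) − ord_p(g(ζ−1))| < c. -/

import Mathlib

open PowerSeries

section Aux

variable {p : ℕ} [Fact p.Prime] {K : Type} [NormedField K] [CompleteSpace K] [Algebra ℤ_[p] K]

/-- Evaluation of a power series over `ℤ_[p]` at a point of `K`. -/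
noncomputable def evalPS (h : PowerSeries ℤ_[p]) (x : K) : K :=
  ∑' k : ℕ, algebraMap ℤ_[p] K (PowerSeries.coeff k h) * x ^ k

lemma evalPS_p_pow (μ : ℕ) (x : K) :
    evalPS ((p : PowerSeries ℤ_[p]) ^ μ) x = algebraMap ℤ_[p] K ((p : ℤ_[p]) ^ μ) := by
  have hC : (p : PowerSeries ℤ_[p]) ^ μ = PowerSeries.C ((p : ℤ_[p]) ^ μ) := by
    rw [map_pow, map_natCast]
  rw [evalPS, tsum_eq_single 0 ?_]
  · rw [hC, pow_zero, mul_one, PowerSeries.coeff_zero_eq_constantCoeff_apply,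
      PowerSeries.constantCoeff_C]
  · intro k hk
    rw [hC, PowerSeries.coeff_C, if_neg hk, map_zero, zero_mul]

variable (halg : ∀ a : ℤ_[p], ‖algebraMap ℤ_[p] K a‖ = ‖a‖)
include halg

lemma summable_norm_evalPS (h : PowerSeries ℤ_[p]) {x : K} (hx : ‖x‖ < 1) :
    Summable fun k : ℕ => ‖algebraMap ℤ_[p] K (PowerSeries.coeff k h) * x ^ k‖ := by
  refine Summable.of_nonneg_of_le (fun k => norm_nonneg _) (fun k => ?_)
    (summable_geometric_of_lt_one (norm_nonneg x) hx)
  rw [norm_mul, norm_pow, halg]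
  exact mul_le_of_le_one_left (pow_nonneg (norm_nonneg x) k) (PadicInt.norm_le_one _)

lemma evalPS_mul (a b : PowerSeries ℤ_[p]) {x : K} (hx : ‖x‖ < 1) :
    evalPS (a * b) x = evalPS a x * evalPS b x := by
  rw [evalPS, evalPS, evalPS,
    tsum_mul_tsum_eq_tsum_sum_antidiagonal_of_summable_norm
      (summable_norm_evalPS halg a hx) (summable_norm_evalPS halg b hx)]
  refine tsum_congr fun n => ?_
  rw [PowerSeries.coeff_mul, map_sum, Finset.sum_mul]
  refine Finset.sum_congr rfl fun kl hkl => ?_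
  rw [Finset.HasAntidiagonal.mem_antidiagonal] at hkl
  rw [map_mul, ← hkl, pow_add]
  ring

lemma norm_evalPS_unit [IsUltrametricDist K] (U : (PowerSeries ℤ_[p])ˣ) {x : K}
    (hx : ‖x‖ < 1) : ‖evalPS (U : PowerSeries ℤ_[p]) x‖ = 1 := by
  have hsum : Summable fun k : ℕ =>
      algebraMap ℤ_[p] K (PowerSeries.coeff k (U : PowerSeries ℤ_[p])) * x ^ k :=
    (summable_norm_evalPS halg _ hx).of_norm
  rw [evalPS, hsum.tsum_eq_zero_add]
  have h0 : ‖algebraMap ℤ_[p] K (PowerSeries.coeff 0 (U : PowerSeries ℤ_[p])) * x ^ 0‖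
      = 1 := by
    rw [pow_zero, mul_one, halg, ← PadicInt.isUnit_iff,
      PowerSeries.coeff_zero_eq_constantCoeff_apply]
    exact PowerSeries.isUnit_constantCoeff _ U.isUnit
  have htail : ‖∑' k : ℕ,
      algebraMap ℤ_[p] K (PowerSeries.coeff (k + 1) (U : PowerSeries ℤ_[p])) * x ^ (k + 1)‖
      ≤ ‖x‖ := by
    refine IsUltrametricDist.norm_tsum_le_of_forall_le_of_nonneg (norm_nonneg x) fun k => ?_
    rw [norm_mul, norm_pow, halg]
    calc ‖PowerSeries.coeff (k + 1) (U : PowerSeries ℤ_[p])‖ * ‖x‖ ^ (k + 1)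
        ≤ 1 * ‖x‖ ^ (k + 1) := by
          gcongr; exact PadicInt.norm_le_one _
      _ = ‖x‖ ^ (k + 1) := one_mul _
      _ ≤ ‖x‖ := pow_le_of_le_one (norm_nonneg x) hx.le (Nat.succ_ne_zero k)
  have hne : ‖algebraMap ℤ_[p] K (PowerSeries.coeff 0 (U : PowerSeries ℤ_[p])) * x ^ 0‖
      ≠ ‖∑' k : ℕ,
      algebraMap ℤ_[p] K (PowerSeries.coeff (k + 1) (U : PowerSeries ℤ_[p])) * x ^ (k + 1)‖ := by
    rw [h0]
    exact fun heq => (htail.trans_lt hx).ne heq.symm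
  rw [IsUltrametricDist.norm_add_eq_max_of_norm_ne_norm hne, h0]
  exact max_eq_left (htail.trans hx.le)

lemma norm_evalPS_poly [IsUltrametricDist K] (P : Polynomial ℤ_[p]) (lam : ℕ)
    (hmonic : P.Monic) (hdeg : P.natDegree = lam) (hdist : ∀ i < lam, ‖P.coeff i‖ < 1)
    {x : K} (hx1 : ‖x‖ < 1) (hxp : ((p : ℝ))⁻¹ < ‖x‖ ^ lam) :
    ‖evalPS (P : PowerSeries ℤ_[p]) x‖ = ‖x‖ ^ lam := by
  rw [evalPS, tsum_eq_sum (s := Finset.range (lam + 1)) ?_]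
  swap
  · intro k hk
    rw [Finset.mem_range, not_lt] at hk
    have : P.coeff k = 0 :=
      Polynomial.coeff_eq_zero_of_natDegree_lt (by omega : P.natDegree < k)
    rw [Polynomial.coeff_coe, this, map_zero, zero_mul]
  rw [Finset.sum_range_succ]
  have htop : algebraMap ℤ_[p] K (PowerSeries.coeff lam (P : PowerSeries ℤ_[p])) * x ^ lam
      = x ^ lam := by
    rw [Polynomial.coeff_coe, ← hdeg, hmonic.coeff_natDegree, map_one, one_mul]
  rw [htop]
  have hxlam : ‖x ^ lam‖ = ‖x‖ ^ lam := norm_pow x lam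
  have hrest : ‖∑ i ∈ Finset.range lam,
      algebraMap ℤ_[p] K (PowerSeries.coeff i (P : PowerSeries ℤ_[p])) * x ^ i‖
      < ‖x ^ lam‖ := by
    rw [hxlam]
    have hCnn : (0:ℝ) ≤ (p : ℝ)⁻¹ := inv_nonneg.mpr (Nat.cast_nonneg p)
    refine lt_of_le_of_lt
      (IsUltrametricDist.norm_sum_le_of_forall_le_of_nonneg hCnn fun i hi => ?_) hxp
    rw [Finset.mem_range] at hi
    rw [norm_mul, norm_pow, halg, Polynomial.coeff_coe]
    have h1 : ‖P.coeff i‖ ≤ (p : ℝ)⁻¹ := by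
      obtain ⟨w, hw⟩ := (PadicInt.norm_lt_one_iff_dvd _).mp (hdist i hi)
      rw [hw, norm_mul, PadicInt.norm_p]
      exact mul_le_of_le_one_right hCnn (PadicInt.norm_le_one w)
    have h2 : ‖x‖ ^ i ≤ 1 := pow_le_one₀ (norm_nonneg x) hx1.le
    calc ‖P.coeff i‖ * ‖x‖ ^ i ≤ (p : ℝ)⁻¹ * 1 :=
          mul_le_mul h1 h2 (by positivity) hCnn
      _ = (p : ℝ)⁻¹ := mul_one _
  rw [IsUltrametricDist.norm_add_eq_max_of_norm_ne_norm (ne_of_lt hrest),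
    max_eq_right hrest.le, hxlam]

lemma norm_eval_factored [IsUltrametricDist K] (h : PowerSeries ℤ_[p]) (μ lam : ℕ)
    (U : (PowerSeries ℤ_[p])ˣ) (P : Polynomial ℤ_[p])
    (hmonic : P.Monic) (hdeg : P.natDegree = lam) (hdist : ∀ i < lam, ‖P.coeff i‖ < 1)
    (hfact : h = (p : PowerSeries ℤ_[p]) ^ μ * (U : PowerSeries ℤ_[p]) * (P : PowerSeries ℤ_[p]))
    {x : K} (hx1 : ‖x‖ < 1) (hxp : ((p : ℝ))⁻¹ < ‖x‖ ^ lam) :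
    ‖evalPS h x‖ = (p : ℝ) ^ (-(μ : ℝ)) * ‖x‖ ^ lam := by
  have hp0 : (0:ℝ) < p := by exact_mod_cast (Fact.out : p.Prime).pos
  rw [hfact, evalPS_mul halg _ _ hx1, evalPS_mul halg _ _ hx1, norm_mul, norm_mul,
    norm_evalPS_unit halg U hx1, norm_evalPS_poly halg P lam hmonic hdeg hdist hx1 hxp,
    evalPS_p_pow, halg, PadicInt.norm_p_pow, mul_one]
  congr 1
  rw [← Real.rpow_intCast (p : ℝ) (-(μ:ℤ))]
  norm_num

end Aux

/-- Let `f, g ∈ ℤ_p[[X]]` be nonzero with the same `μ`-invariant and `λ`-invariants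
`λ_f, λ_g` (via Weierstrass preparation).  Then, evaluating at `ζ - 1` for `ζ` a
primitive `p^n`-th root of unity and writing `ord_p(x) = -log_p ‖x‖`, for all
sufficiently large `n` one has
`ord_p(f(ζ-1)) - ord_p(g(ζ-1)) = (λ_f - λ_g)/(p^n - p^{n-1})`; in particular the
difference tends to `0`: for every `c > 0`, `|ord_p(f(ζ-1)) - ord_p(g(ζ-1))| < c`
for all large `n`. -/
theorem stmt6 (p : ℕ) [Fact p.Prime]
    (K : Type) [NormedField K] [CompleteSpace K] [Algebra ℤ_[p] K]
    (halg : ∀ a : ℤ_[p], ‖algebraMap ℤ_[p] K a‖ = ‖a‖)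
    (f g : PowerSeries ℤ_[p]) (hf : f ≠ 0) (hg : g ≠ 0)
    (μ lamf lamg : ℕ)
    (Uf Ug : (PowerSeries ℤ_[p])ˣ) (Pf Pg : Polynomial ℤ_[p])
    (hPfmonic : Pf.Monic) (hPfdeg : Pf.natDegree = lamf)
    (hPfdist : ∀ i < lamf, ‖Pf.coeff i‖ < 1)
    (hPgmonic : Pg.Monic) (hPgdeg : Pg.natDegree = lamg)
    (hPgdist : ∀ i < lamg, ‖Pg.coeff i‖ < 1)
    (hffact : f = (p : PowerSeries ℤ_[p]) ^ μ * (Uf : PowerSeries ℤ_[p]) * (Pf : PowerSeries ℤ_[p]))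
    (hgfact : g = (p : PowerSeries ℤ_[p]) ^ μ * (Ug : PowerSeries ℤ_[p]) * (Pg : PowerSeries ℤ_[p]))
    (ordp : K → ℝ) (hordp : ∀ x : K, ordp x = -Real.logb p ‖x‖)
    (F G : K → K)
    (hF : ∀ x : K, F x = ∑' k : ℕ, algebraMap ℤ_[p] K (PowerSeries.coeff k f) * x ^ k)
    (hG : ∀ x : K, G x = ∑' k : ℕ, algebraMap ℤ_[p] K (PowerSeries.coeff k g) * x ^ k) :
    (∃ N : ℕ, ∀ n ≥ N, ∀ ζ : K, IsPrimitiveRoot ζ (p ^ n) →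
      ‖ζ - 1‖ = (p : ℝ) ^ (-(1 / ((p : ℝ) ^ (n - 1) * ((p : ℝ) - 1)))) →
      ordp (F (ζ - 1)) - ordp (G (ζ - 1)) =
        ((lamf : ℝ) - (lamg : ℝ)) / ((p : ℝ) ^ n - (p : ℝ) ^ (n - 1))) ∧
    (∀ c : ℝ, 0 < c → ∃ N : ℕ, ∀ n ≥ N, ∀ ζ : K, IsPrimitiveRoot ζ (p ^ n) →
      ‖ζ - 1‖ = (p : ℝ) ^ (-(1 / ((p : ℝ) ^ (n - 1) * ((p : ℝ) - 1)))) →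
      |ordp (F (ζ - 1)) - ordp (G (ζ - 1))| < c) := by
  have hp2 : 2 ≤ p := (Fact.out : p.Prime).two_le
  have hp2' : (2:ℝ) ≤ p := by exact_mod_cast hp2
  have hp1 : (1:ℝ) < p := by exact_mod_cast (Fact.out : p.Prime).one_lt
  have hp0 : (0:ℝ) < p := lt_trans one_pos hp1
  haveI : IsUltrametricDist K := by
    apply IsUltrametricDist.isUltrametricDist_of_forall_norm_natCast_le_one
    intro n
    rw [show ((n : K)) = algebraMap ℤ_[p] K (n : ℤ_[p]) from (map_natCast _ n).symm, halg]
    exact PadicInt.norm_le_one _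
  set N₀ : ℕ := lamf + lamg + 2 with hN₀
  have key : ∀ n ≥ N₀, ∀ ζ : K, IsPrimitiveRoot ζ (p ^ n) →
      ‖ζ - 1‖ = (p : ℝ) ^ (-(1 / ((p : ℝ) ^ (n - 1) * ((p : ℝ) - 1)))) →
      ordp (F (ζ - 1)) - ordp (G (ζ - 1)) =
        ((lamf : ℝ) - (lamg : ℝ)) / ((p : ℝ) ^ n - (p : ℝ) ^ (n - 1)) := by
    intro n hn ζ hζ hnorm
    set x := ζ - 1 with hxdef
    set Q : ℝ := (p : ℝ) ^ (n - 1) * ((p : ℝ) - 1) with hQdef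
    have hp1' : (1:ℝ) ≤ (p : ℝ) - 1 := by linarith
    have h2n : ((n : ℝ)) ≤ (2:ℝ) ^ (n - 1) := by
      have h1 : n - 1 < 2 ^ (n - 1) := Nat.lt_two_pow_self (n := n - 1)
      have h2 : n ≤ 2 ^ (n - 1) := by omega
      exact_mod_cast h2
    have hpn : (2:ℝ) ^ (n - 1) ≤ (p : ℝ) ^ (n - 1) :=
      pow_le_pow_left₀ (by norm_num) (by exact_mod_cast hp2) _
    have hQn : ((n : ℝ)) ≤ Q := by
      have : (p:ℝ) ^ (n-1) * 1 ≤ Q := by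
        rw [hQdef]
        have : (0:ℝ) ≤ (p:ℝ) ^ (n - 1) := by positivity
        nlinarith
      calc ((n:ℝ)) ≤ (2:ℝ) ^ (n-1) := h2n
        _ ≤ (p:ℝ) ^ (n-1) := hpn
        _ = (p:ℝ) ^ (n-1) * 1 := (mul_one _).symm
        _ ≤ Q := this
    have hQ0 : (0:ℝ) < Q :=
      lt_of_lt_of_le (by exact_mod_cast (show 0 < n by omega) : (0:ℝ) < (n:ℝ)) hQn
    have hx1 : ‖x‖ < 1 := by
      rw [hnorm]
      refine Real.rpow_lt_one_of_one_lt_of_neg hp1 ?_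
      rw [neg_lt, neg_zero]
      positivity
    have hpowlam : ∀ lam : ℕ, ‖x‖ ^ lam = (p:ℝ) ^ (-((lam : ℝ) / Q)) := by
      intro lam
      rw [hnorm, ← Real.rpow_natCast ((p:ℝ) ^ (-(1/Q))) lam, ← Real.rpow_mul hp0.le]
      congr 1
      ring
    have hxplam : ∀ lam : ℕ, (lam : ℝ) < Q → ((p : ℝ))⁻¹ < ‖x‖ ^ lam := by
      intro lam hlam
      rw [hpowlam lam, ← Real.rpow_neg_one (p : ℝ)]
      refine (Real.rpow_lt_rpow_left_iff hp1).mpr ?_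
      rw [neg_lt_neg_iff, div_lt_one hQ0]
      exact hlam
    have hlamfQ : (lamf : ℝ) < Q := by
      have : ((lamf : ℝ)) + 1 ≤ (n : ℝ) := by exact_mod_cast (by omega : lamf + 1 ≤ n)
      linarith [hQn]
    have hlamgQ : (lamg : ℝ) < Q := by
      have : ((lamg : ℝ)) + 1 ≤ (n : ℝ) := by exact_mod_cast (by omega : lamg + 1 ≤ n)
      linarith [hQn]
    have hord : ∀ (h : PowerSeries ℤ_[p]) (lam : ℕ) (U : (PowerSeries ℤ_[p])ˣ)
        (P : Polynomial ℤ_[p]), P.Monic → P.natDegree = lam → (∀ i < lam, ‖P.coeff i‖ < 1) →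
        h = (p : PowerSeries ℤ_[p]) ^ μ * (U : PowerSeries ℤ_[p]) * (P : PowerSeries ℤ_[p]) →
        ((lam : ℝ) < Q) →
        -Real.logb p ‖evalPS h x‖ = (μ : ℝ) + (lam : ℝ) / Q := by
      intro h lam U P hmonic hdeg hdist hfact hlamQ
      rw [norm_eval_factored halg h μ lam U P hmonic hdeg hdist hfact hx1 (hxplam lam hlamQ),
        hpowlam lam, ← Real.rpow_add hp0, Real.logb_rpow hp0 (by linarith : (p:ℝ) ≠ 1)]
      ring
    have hFx : F x = evalPS f x := (hF x).trans rfl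
    have hGx : G x = evalPS g x := (hG x).trans rfl
    rw [hordp, hordp, hFx, hGx,
      hord f lamf Uf Pf hPfmonic hPfdeg hPfdist hffact hlamfQ,
      hord g lamg Ug Pg hPgmonic hPgdeg hPgdist hgfact hlamgQ]
    have hden : (p : ℝ) ^ n - (p : ℝ) ^ (n - 1) = Q := by
      obtain ⟨m, rfl⟩ : ∃ m, n = m + 1 := ⟨n - 1, by omega⟩
      simp only [hQdef, Nat.add_sub_cancel, pow_succ]
      ring
    rw [hden]
    field_simp
    ring
  refine ⟨⟨N₀, key⟩, ?_⟩
  intro c hc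
  obtain ⟨M, hM⟩ := pow_unbounded_of_one_lt (|(lamf : ℝ) - (lamg : ℝ)| / c)
    (by norm_num : (1:ℝ) < 2)
  refine ⟨M + N₀, fun n hn ζ hζ hnorm => ?_⟩
  rw [key n (by omega) ζ hζ hnorm]
  set Q : ℝ := (p : ℝ) ^ n - (p : ℝ) ^ (n - 1) with hQdef
  have hQeq : Q = (p : ℝ) ^ (n - 1) * ((p : ℝ) - 1) := by
    obtain ⟨m, rfl⟩ : ∃ m, n = m + 1 := ⟨n - 1, by omega⟩
    simp only [hQdef, Nat.add_sub_cancel, pow_succ]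
    ring
  have hQge : (2:ℝ) ^ M ≤ Q := by
    rw [hQeq]
    calc (2:ℝ) ^ M ≤ (2:ℝ) ^ (n - 1) := pow_le_pow_right₀ one_le_two (by omega)
      _ ≤ (p:ℝ) ^ (n - 1) := pow_le_pow_left₀ (by norm_num) (by exact_mod_cast hp2) _
      _ = (p:ℝ) ^ (n - 1) * 1 := (mul_one _).symm
      _ ≤ (p:ℝ) ^ (n - 1) * ((p:ℝ) - 1) := by
        have h1 : (1:ℝ) ≤ (p:ℝ) - 1 := by linarith [hp2']
        have h0 : (0:ℝ) ≤ (p:ℝ) ^ (n - 1) := by positivity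
        nlinarith
  have hQ0 : (0:ℝ) < Q := lt_of_lt_of_le (by positivity) hQge
  rw [abs_div, abs_of_pos hQ0, div_lt_iff₀ hQ0]
  have h1 : |(lamf : ℝ) - (lamg : ℝ)| < c * 2 ^ M := by
    rw [div_lt_iff₀ hc] at hM; linarith
  calc |(lamf : ℝ) - (lamg : ℝ)| < c * 2 ^ M := h1
    _ ≤ c * Q := by nlinarith
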